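/- Define F(v) = (Γ(1/2 + v/2)/Γ(1/2 - v/2))^2 · Γ(1-v)/Γ(1+v). Then F is positive and strictly decreasing on [0, 2/38], with F(0) = 1. -/
import Mathlib

open Real Set

lemma slope_le_slope_aux {f : ℝ → ℝ} (hf : ConvexOn ℝ (Set.Ioi 0) f) {a b c d : ℝ}
    (ha : 0 < a) (hc : 0 < c) (hab : a < b) (hcd : c < d) (hac : a ≤ c) (hbd : b ≤ d) :
    (f b - f a) / (b - a) ≤ (f d - f c) / (d - c) := by
  have hb : 0 < b := ha.trans hab
  have hd : 0 < d := hc.trans hcd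
  have had : a < d := hab.trans_le hbd
  have h1 : (f b - f a) / (b - a) ≤ (f d - f a) / (d - a) :=
    hf.secant_mono (mem_Ioi.2 ha) (mem_Ioi.2 hb) (mem_Ioi.2 hd)
      (by linarith) (by linarith) hbd
  have h2 : (f a - f d) / (a - d) ≤ (f c - f d) / (c - d) :=
    hf.secant_mono (mem_Ioi.2 hd) (mem_Ioi.2 ha) (mem_Ioi.2 hc)
      (by linarith) (by linarith) hac
  have e1 : (f a - f d) / (a - d) = (f d - f a) / (d - a) := by
    rw [← neg_div_neg_eq]; congr 1 <;> ring
  have e2 : (f c - f d) / (c - d) = (f d - f c) / (d - c) := by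
    rw [← neg_div_neg_eq]; congr 1 <;> ring
  rw [e1, e2] at h2
  exact h1.trans h2

noncomputable def F (v : ℝ) : ℝ :=
  (Real.Gamma (1 / 2 + v / 2) / Real.Gamma (1 / 2 - v / 2)) ^ 2 *
    (Real.Gamma (1 - v) / Real.Gamma (1 + v))

lemma log_F_eq {v : ℝ} (hv0 : 0 ≤ v) (hv1 : v ≤ 2 / 38) :
    Real.log (F v) = Real.log (Real.Gamma (1 + v)) - 2 * Real.log (Real.Gamma (1 + v / 2))
      + 2 * Real.log (Real.Gamma (1 - v / 2)) - Real.log (Real.Gamma (1 - v))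
      - 4 * v * Real.log 2 := by
  have ha : 0 < Real.Gamma (1 / 2 + v / 2) := Real.Gamma_pos_of_pos (by linarith)
  have hb : 0 < Real.Gamma (1 / 2 - v / 2) := Real.Gamma_pos_of_pos (by linarith)
  have hc : 0 < Real.Gamma (1 - v) := Real.Gamma_pos_of_pos (by linarith)
  have hd : 0 < Real.Gamma (1 + v) := Real.Gamma_pos_of_pos (by linarith)
  have he : 0 < Real.Gamma (1 + v / 2) := Real.Gamma_pos_of_pos (by linarith)
  have hg : 0 < Real.Gamma (1 - v / 2) := Real.Gamma_pos_of_pos (by linarith)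
  have hsq : 0 < Real.sqrt π := Real.sqrt_pos.2 pi_pos
  have hdup1 : Real.Gamma (1 / 2 + v / 2) * Real.Gamma (1 + v / 2)
      = Real.Gamma (1 + v) * (2 : ℝ) ^ (-v) * Real.sqrt π := by
    have h := Real.Gamma_mul_Gamma_add_half (1 / 2 + v / 2)
    rw [show (1 / 2 + v / 2) + 1 / 2 = 1 + v / 2 by ring,
      show 2 * (1 / 2 + v / 2) = 1 + v by ring,
      show 1 - (1 + v) = -v by ring] at h
    exact h
  have hdup2 : Real.Gamma (1 / 2 - v / 2) * Real.Gamma (1 - v / 2)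
      = Real.Gamma (1 - v) * (2 : ℝ) ^ (v : ℝ) * Real.sqrt π := by
    have h := Real.Gamma_mul_Gamma_add_half (1 / 2 - v / 2)
    rw [show (1 / 2 - v / 2) + 1 / 2 = 1 - v / 2 by ring,
      show 2 * (1 / 2 - v / 2) = 1 - v by ring,
      show 1 - (1 - v) = v by ring] at h
    exact h
  have hla : Real.log (Real.Gamma (1 / 2 + v / 2))
      = Real.log (Real.Gamma (1 + v)) + (-v) * Real.log 2 + Real.log (Real.sqrt π)
        - Real.log (Real.Gamma (1 + v / 2)) := by
    have := congrArg Real.log hdup1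
    rw [Real.log_mul (by positivity) hsq.ne', Real.log_mul hd.ne' (by positivity),
      Real.log_mul ha.ne' he.ne', Real.log_rpow two_pos] at this
    linarith
  have hlb : Real.log (Real.Gamma (1 / 2 - v / 2))
      = Real.log (Real.Gamma (1 - v)) + v * Real.log 2 + Real.log (Real.sqrt π)
        - Real.log (Real.Gamma (1 - v / 2)) := by
    have := congrArg Real.log hdup2
    rw [Real.log_mul (by positivity) hsq.ne', Real.log_mul hc.ne' (by positivity),
      Real.log_mul hb.ne' hg.ne', Real.log_rpow two_pos] at this
    linarith
  have hlF : Real.log (F v) = 2 * Real.log (Real.Gamma (1 / 2 + v / 2))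
      - 2 * Real.log (Real.Gamma (1 / 2 - v / 2))
      + Real.log (Real.Gamma (1 - v)) - Real.log (Real.Gamma (1 + v)) := by
    rw [F, Real.log_mul (by positivity) (by positivity), Real.log_pow,
      Real.log_div ha.ne' hb.ne', Real.log_div hc.ne' hd.ne']
    push_cast; ring
  rw [hlF, hla, hlb]; ring

lemma F_pos' {x : ℝ} (hx : x ∈ Set.Icc (0 : ℝ) (2 / 38)) : 0 < F x := by
  obtain ⟨h0, h1⟩ := hx
  have ha : 0 < Real.Gamma (1 / 2 + x / 2) := Real.Gamma_pos_of_pos (by linarith)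
  have hb : 0 < Real.Gamma (1 / 2 - x / 2) := Real.Gamma_pos_of_pos (by linarith)
  have hc : 0 < Real.Gamma (1 - x) := Real.Gamma_pos_of_pos (by linarith)
  have hd : 0 < Real.Gamma (1 + x) := Real.Gamma_pos_of_pos (by linarith)
  rw [F]; positivity

theorem F_pos_strictAnti :
    (∀ x ∈ Set.Icc (0 : ℝ) (2 / 38), 0 < F x) ∧
      StrictAntiOn F (Set.Icc (0 : ℝ) (2 / 38)) ∧ F 0 = 1 := by
  refine ⟨fun x hx => F_pos' hx, ?_, ?_⟩
  · intro x hx y hy hxy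
    obtain ⟨hx0, hx1⟩ := hx
    obtain ⟨hy0, hy1⟩ := hy
    set f : ℝ → ℝ := Real.log ∘ Real.Gamma with hf_def
    have hconv : ConvexOn ℝ (Set.Ioi 0) f := Real.convexOn_log_Gamma
    have hD : (0 : ℝ) < y - x := by linarith
    -- values at special points
    have hf1 : f 1 = 0 := by simp [hf_def, Real.Gamma_one]
    have hf2 : f 2 = 0 := by simp [hf_def, Real.Gamma_two]
    have hfhalf : f (1 / 2) = Real.log (Real.sqrt π) := by
      rw [hf_def]; simp only [Function.comp_apply]; rw [Real.Gamma_one_half_eq]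
    have hf32 : f (3 / 2) = Real.log (Real.sqrt π) - Real.log 2 := by
      have h : Real.Gamma (3 / 2) = Real.sqrt π / 2 := by
        have := Real.Gamma_add_one (by norm_num : (1/2 : ℝ) ≠ 0)
        rw [show (1 : ℝ) / 2 + 1 = 3 / 2 by ring] at this
        rw [this, Real.Gamma_one_half_eq]; ring
      rw [hf_def]
      simp only [Function.comp_apply, h]
      rw [Real.log_div (Real.sqrt_pos.2 pi_pos).ne' two_ne_zero]
    -- slope inequalities
    have hA := slope_le_slope_aux hconv (a := 1 + x) (b := 1 + y) (c := 3 / 2) (d := 2)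
      (by linarith) (by norm_num) (by linarith) (by norm_num) (by linarith) (by linarith)
    have hB := slope_le_slope_aux hconv (a := 1 / 2) (b := 1) (c := 1 + x / 2) (d := 1 + y / 2)
      (by norm_num) (by linarith) (by norm_num) (by linarith) (by linarith) (by linarith)
    have hC := slope_le_slope_aux hconv (a := 1 - y) (b := 1 - x) (c := 1 - y / 2) (d := 1 - x / 2)
      (by linarith) (by linarith) (by linarith) (by linarith) (by linarith) (by linarith)
    rw [show (1 + y) - (1 + x) = y - x by ring, show (2 : ℝ) - 3 / 2 = 1 / 2 by norm_num] at hA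
    rw [show (1 : ℝ) - 1 / 2 = 1 / 2 by norm_num,
      show (1 + y / 2) - (1 + x / 2) = (y - x) / 2 by ring] at hB
    rw [show (1 - x) - (1 - y) = y - x by ring,
      show (1 - x / 2) - (1 - y / 2) = (y - x) / 2 by ring] at hC
    have hA' : f (1 + y) - f (1 + x) ≤ (2 * (f 2 - f (3 / 2))) * (y - x) := by
      rw [← div_le_iff₀ hD]
      calc (f (1 + y) - f (1 + x)) / (y - x) ≤ (f 2 - f (3 / 2)) / (1 / 2) := hA
        _ = 2 * (f 2 - f (3 / 2)) := by ring
    have hB' : (2 * (f 1 - f (1 / 2))) * ((y - x) / 2) ≤ f (1 + y / 2) - f (1 + x / 2) := by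
      rw [← le_div_iff₀ (by linarith : (0:ℝ) < (y - x) / 2)]
      calc (2 : ℝ) * (f 1 - f (1 / 2)) = (f 1 - f (1 / 2)) / (1 / 2) := by ring
        _ ≤ _ := hB
    have hC' : (f (1 - x) - f (1 - y)) * ((y - x) / 2) ≤ (f (1 - x / 2) - f (1 - y / 2)) * (y - x) := by
      rw [div_le_div_iff₀ hD (by linarith : (0:ℝ) < (y - x) / 2)] at hC
      linarith
    have hlx := log_F_eq hx0 hx1
    have hly := log_F_eq hy0 hy1
    have hl2 : (0 : ℝ) < Real.log 2 := Real.log_pos (by norm_num)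
    have hkey : 0 < (y - x) * Real.log 2 := mul_pos hD hl2
    have hlog_lt : Real.log (F y) < Real.log (F x) := by
      rw [hlx, hly]
      simp only [hf1, hf2, hfhalf, hf32] at hA' hB' hC'
      simp only [hf_def, Function.comp_apply] at hA' hB' hC'
      nlinarith [hA', hB', hC', hkey]
    have hFx := F_pos' (⟨hx0, hx1⟩ : x ∈ Set.Icc (0:ℝ) (2/38))
    have hFy := F_pos' (⟨hy0, hy1⟩ : y ∈ Set.Icc (0:ℝ) (2/38))
    calc F y = Real.exp (Real.log (F y)) := (Real.exp_log hFy).symm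
      _ < Real.exp (Real.log (F x)) := Real.exp_lt_exp.2 hlog_lt
      _ = F x := Real.exp_log hFx
  · have h : Real.Gamma (1 / 2) ≠ 0 := (Real.Gamma_pos_of_pos (by norm_num)).ne'
    rw [F]
    norm_num [Real.Gamma_one, div_self h]
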